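/- Let G be a connected graph on n vertices, α ∈ [1/2, 1), and let x denote either (∑_i RTr(v_i)²/n)^{1/2} or 2H(G)/n. Then S_{RD_α}(G) ≥ x - ((‖RD_α‖_F² - x²)/(n-1))^{1/2}, with equality if and only if G ≅ K_n. -/

import Mathlib

set_option linter.unusedSectionVars false
set_option maxHeartbeats 1000000


open Matrix BigOperators Finset

variable {V : Type*} [Fintype V] [DecidableEq V]

/-- Reciprocal distance (Harary) matrix. -/
noncomputable def RD (G : SimpleGraph V) : Matrix V V ℝ :=
  Matrix.of fun i j => if i = j then 0 else (1 : ℝ) / (G.dist i j)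

/-- Reciprocal transmission of a vertex. -/
noncomputable def RTr (G : SimpleGraph V) (i : V) : ℝ := ∑ j, RD G i j

/-- Generalized reciprocal distance matrix. -/
noncomputable def RDa (α : ℝ) (G : SimpleGraph V) : Matrix V V ℝ :=
  α • Matrix.diagonal (RTr G) + (1 - α) • RD G

/-- Harary index. -/
noncomputable def harary (G : SimpleGraph V) : ℝ := (∑ i, RTr G i) / 2

/-- Reciprocal transmission regular graph. -/
def TransRegular (G : SimpleGraph V) : Prop := ∀ i j : V, RTr G i = RTr G j

noncomputable def maxEig {M : Matrix V V ℝ} (hM : M.IsHermitian) : ℝ := ⨆ i, hM.eigenvalues i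

noncomputable def minEig {M : Matrix V V ℝ} (hM : M.IsHermitian) : ℝ := ⨅ i, hM.eigenvalues i

/-- Spread of a real symmetric matrix. -/
noncomputable def spread {M : Matrix V V ℝ} (hM : M.IsHermitian) : ℝ := maxEig hM - minEig hM

namespace SpreadAux


lemma spec_real {M : Matrix V V ℝ} (hM : M.IsHermitian) :
    M = (hM.eigenvectorUnitary : Matrix V V ℝ) * Matrix.diagonal hM.eigenvalues *
      (star (hM.eigenvectorUnitary : Matrix V V ℝ)) := by
  have h := hM.spectral_theorem
  simpa [RCLike.ofReal_real_eq_id] using h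

lemma star_mul_self {M : Matrix V V ℝ} (hM : M.IsHermitian) :
    (star (hM.eigenvectorUnitary : Matrix V V ℝ)) * (hM.eigenvectorUnitary : Matrix V V ℝ) = 1 :=
  (Matrix.mem_unitaryGroup_iff').mp (hM.eigenvectorUnitary).2

lemma mul_star_self {M : Matrix V V ℝ} (hM : M.IsHermitian) :
    (hM.eigenvectorUnitary : Matrix V V ℝ) * (star (hM.eigenvectorUnitary : Matrix V V ℝ)) = 1 :=
  (Matrix.mem_unitaryGroup_iff).mp (hM.eigenvectorUnitary).2

lemma dot_preserve {U : Matrix V V ℝ} (hU : star U * U = 1) (a b : V → ℝ) :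
    (U *ᵥ a) ⬝ᵥ (U *ᵥ b) = a ⬝ᵥ b := by
  rw [dotProduct_mulVec]
  have h1 : (U *ᵥ a) ᵥ* U = a := by
    rw [← Matrix.mulVec_transpose, Matrix.mulVec_mulVec]
    have : Uᵀ * U = 1 := by
      rw [← Matrix.conjTranspose_eq_transpose_of_trivial, ← Matrix.star_eq_conjTranspose]
      exact hU
    rw [this, Matrix.one_mulVec]
  rw [h1]

lemma abstract_mulVec {A U D : Matrix V V ℝ} (hA : A = U * D * star U)
    (hU : star U * U = 1) (w : V → ℝ) :
    A *ᵥ (U *ᵥ w) = U *ᵥ (D *ᵥ w) := by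
  subst hA
  rw [Matrix.mulVec_mulVec, mul_assoc, mul_assoc, hU, mul_one, Matrix.mulVec_mulVec]

lemma abstract_trace {A U D : Matrix V V ℝ} (hA : A = U * D * star U)
    (hU : star U * U = 1) : (A * A).trace = (D * D).trace := by
  subst hA
  have h : U * D * star U * (U * D * star U) = U * (D * D) * star U := by
    calc U * D * star U * (U * D * star U) = U * (D * ((star U * U) * (D * star U))) := by
          simp only [mul_assoc]
      _ = U * (D * D) * star U := by rw [hU, one_mul]; simp only [mul_assoc]
  rw [h, Matrix.trace_mul_cycle, ← mul_assoc, hU, one_mul]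

lemma mulVec_decomp {M : Matrix V V ℝ} (hM : M.IsHermitian) (w : V → ℝ) :
    M *ᵥ ((hM.eigenvectorUnitary : Matrix V V ℝ) *ᵥ w)
      = (hM.eigenvectorUnitary : Matrix V V ℝ) *ᵥ (fun i => hM.eigenvalues i * w i) := by
  have h : (Matrix.diagonal hM.eigenvalues) *ᵥ w = fun i => hM.eigenvalues i * w i := by
    funext i; exact Matrix.mulVec_diagonal _ _ _
  rw [abstract_mulVec (spec_real hM) (star_mul_self hM), h]

/-- Core computation: quadratic forms in eigen-coordinates. -/
lemma core {M : Matrix V V ℝ} (hM : M.IsHermitian) (w : V → ℝ) :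
    ((hM.eigenvectorUnitary : Matrix V V ℝ) *ᵥ w) ⬝ᵥ ((hM.eigenvectorUnitary : Matrix V V ℝ) *ᵥ w) = ∑ i, w i ^ 2 ∧
    ((hM.eigenvectorUnitary : Matrix V V ℝ) *ᵥ w) ⬝ᵥ (M *ᵥ ((hM.eigenvectorUnitary : Matrix V V ℝ) *ᵥ w)) = ∑ i, hM.eigenvalues i * w i ^ 2 ∧
    (M *ᵥ ((hM.eigenvectorUnitary : Matrix V V ℝ) *ᵥ w)) ⬝ᵥ (M *ᵥ ((hM.eigenvectorUnitary : Matrix V V ℝ) *ᵥ w)) = ∑ i, hM.eigenvalues i ^ 2 * w i ^ 2 := by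
  refine ⟨?_, ?_, ?_⟩
  · rw [dot_preserve (star_mul_self hM)]
    simp [dotProduct, sq]
  · rw [mulVec_decomp hM, dot_preserve (star_mul_self hM)]
    simp only [dotProduct]
    exact Finset.sum_congr rfl fun i _ => by ring
  · rw [mulVec_decomp hM, dot_preserve (star_mul_self hM)]
    simp only [dotProduct]
    exact Finset.sum_congr rfl fun i _ => by ring

lemma exists_w {M : Matrix V V ℝ} (hM : M.IsHermitian) (v : V → ℝ) :
    ∃ w : V → ℝ, v = (hM.eigenvectorUnitary : Matrix V V ℝ) *ᵥ w := by
  refine ⟨(star (hM.eigenvectorUnitary : Matrix V V ℝ)) *ᵥ v, ?_⟩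
  rw [Matrix.mulVec_mulVec, mul_star_self hM, Matrix.one_mulVec]

/-- Entrywise spectral formula. -/
lemma entry_formula {M : Matrix V V ℝ} (hM : M.IsHermitian) (i j : V) :
    M i j = ∑ k, hM.eigenvalues k *
      ((hM.eigenvectorUnitary : Matrix V V ℝ) i k * (hM.eigenvectorUnitary : Matrix V V ℝ) j k) := by
  conv_lhs => rw [spec_real hM]
  rw [Matrix.mul_apply]
  refine Finset.sum_congr rfl fun k _ => ?_
  rw [Matrix.mul_apply, Finset.sum_eq_single k]
  · rw [Matrix.diagonal_apply_eq, Matrix.star_apply, star_trivial]; ring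
  · intro l _ hl
    simp [Matrix.diagonal_apply_ne _ hl]
  · simp

lemma row_orthonormal {M : Matrix V V ℝ} (hM : M.IsHermitian) (i j : V) :
    ∑ k, (hM.eigenvectorUnitary : Matrix V V ℝ) i k * (hM.eigenvectorUnitary : Matrix V V ℝ) j k
      = if i = j then 1 else 0 := by
  have h : ((hM.eigenvectorUnitary : Matrix V V ℝ) * (star (hM.eigenvectorUnitary : Matrix V V ℝ))) i j = (1 : Matrix V V ℝ) i j := by
    rw [mul_star_self hM]
  rw [Matrix.mul_apply] at h
  simp only [Matrix.star_apply, star_trivial] at h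
  rw [h, Matrix.one_apply]

lemma sum_eigensq {M : Matrix V V ℝ} (hM : M.IsHermitian) :
    ∑ i, hM.eigenvalues i ^ 2 = ∑ i, ∑ j, (M i j) ^ 2 := by
  have h2 : (M * M).trace = ∑ i, hM.eigenvalues i ^ 2 := by
    rw [abstract_trace (spec_real hM) (star_mul_self hM),
      Matrix.diagonal_mul_diagonal, Matrix.trace_diagonal]
    exact Finset.sum_congr rfl fun i _ => (sq _).symm
  have h3 : (M * M).trace = ∑ i, ∑ j, (M i j) ^ 2 := by
    rw [Matrix.trace]
    refine Finset.sum_congr rfl fun i _ => ?_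
    rw [Matrix.diag_apply, Matrix.mul_apply]
    refine Finset.sum_congr rfl fun j _ => ?_
    have h4 : M j i = M i j := by
      have h5 := congrFun (congrFun hM i) j
      simpa using h5
    rw [h4, sq]
  rw [← h2, h3]



lemma RD_apply_self (G : SimpleGraph V) (i : V) : RD G i i = 0 := by simp [RD]

lemma RD_apply_ne (G : SimpleGraph V) {i j : V} (h : i ≠ j) :
    RD G i j = 1 / (G.dist i j) := by simp [RD, h]

lemma RD_nonneg (G : SimpleGraph V) (i j : V) : 0 ≤ RD G i j := by
  by_cases h : i = j
  · simp [RD, h]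
  · rw [RD_apply_ne G h]; positivity

lemma RD_symm (G : SimpleGraph V) (i j : V) : RD G i j = RD G j i := by
  by_cases h : i = j
  · rw [h]
  · rw [RD_apply_ne G h, RD_apply_ne G (Ne.symm h), SimpleGraph.dist_comm]

lemma RD_pos {G : SimpleGraph V} (hG : G.Connected) {i j : V} (h : i ≠ j) :
    0 < RD G i j := by
  rw [RD_apply_ne G h]
  have hd : 0 < G.dist i j := hG.pos_dist_of_ne h
  have : (0 : ℝ) < (G.dist i j : ℝ) := by exact_mod_cast hd
  positivity

lemma RTr_nonneg (G : SimpleGraph V) (i : V) : 0 ≤ RTr G i :=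
  Finset.sum_nonneg fun j _ => RD_nonneg G i j

lemma RDa_apply_self (α : ℝ) (G : SimpleGraph V) (i : V) :
    RDa α G i i = α * RTr G i := by
  simp [RDa, RD_apply_self]

lemma RDa_apply_ne (α : ℝ) (G : SimpleGraph V) {i j : V} (h : i ≠ j) :
    RDa α G i j = (1 - α) * RD G i j := by
  simp [RDa, Matrix.diagonal_apply_ne _ h]

lemma RDa_pos {α : ℝ} {G : SimpleGraph V} (hG : G.Connected) (hα1 : α < 1)
    {i j : V} (h : i ≠ j) : 0 < RDa α G i j := by
  rw [RDa_apply_ne α G h]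
  exact mul_pos (by linarith) (RD_pos hG h)

lemma RDa_rowsum (α : ℝ) (G : SimpleGraph V) (i : V) :
    ∑ j, RDa α G i j = RTr G i := by
  have h : ∀ j, RDa α G i j = α * Matrix.diagonal (RTr G) i j + (1 - α) * RD G i j := by
    intro j; simp [RDa]
  simp only [h, Finset.sum_add_distrib, ← Finset.mul_sum]
  have hd : ∑ j, Matrix.diagonal (RTr G) i j = RTr G i := by
    rw [Finset.sum_eq_single i]
    · simp
    · intro j _ hj; exact Matrix.diagonal_apply_ne' _ hj
    · simp
  rw [hd]
  unfold RTr
  ring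

lemma RDa_mulVec_one (α : ℝ) (G : SimpleGraph V) :
    RDa α G *ᵥ (fun _ => (1 : ℝ)) = fun i => RTr G i := by
  funext i
  simp only [Matrix.mulVec, dotProduct, mul_one]
  exact RDa_rowsum α G i

lemma one_dot_mulVec_one (α : ℝ) (G : SimpleGraph V) :
    (fun _ => (1 : ℝ)) ⬝ᵥ (RDa α G *ᵥ (fun _ => (1 : ℝ))) = ∑ i, RTr G i := by
  rw [RDa_mulVec_one]
  simp [dotProduct]

lemma mulVec_one_dot (α : ℝ) (G : SimpleGraph V) :
    (RDa α G *ᵥ (fun _ => (1 : ℝ))) ⬝ᵥ (RDa α G *ᵥ (fun _ => (1 : ℝ))) = ∑ i, RTr G i ^ 2 := by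
  rw [RDa_mulVec_one]
  simp [dotProduct, sq]

lemma quad_nonneg {α : ℝ} (hα : 1 / 2 ≤ α) (G : SimpleGraph V) (v : V → ℝ) :
    0 ≤ v ⬝ᵥ (RDa α G *ᵥ v) := by
  have hexp : v ⬝ᵥ (RDa α G *ᵥ v)
      = ∑ i, ∑ j, RD G i j * (α * v i ^ 2 + (1 - α) * (v i * v j)) := by
    simp only [dotProduct, Matrix.mulVec, Finset.mul_sum]
    have h : ∀ i j, v i * (RDa α G i j * v j)
        = α * (Matrix.diagonal (RTr G) i j * (v i * v j)) + RD G i j * ((1 - α) * (v i * v j)) := by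
      intro i j; simp [RDa]; ring
    have hd : ∀ i, ∑ j, α * (Matrix.diagonal (RTr G) i j * (v i * v j))
        = ∑ j, RD G i j * (α * v i ^ 2) := by
      intro i
      rw [Finset.sum_eq_single i]
      · rw [← Finset.sum_mul, ← RTr]
        simp only [Matrix.diagonal_apply_eq]
        ring
      · intro j _ hj; rw [Matrix.diagonal_apply_ne' _ hj]; ring
      · simp
    simp only [h, Finset.sum_add_distrib]
    rw [Finset.sum_congr rfl fun i _ => hd i, ← Finset.sum_add_distrib]
    refine Finset.sum_congr rfl fun i _ => ?_
    rw [← Finset.sum_add_distrib]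
    exact Finset.sum_congr rfl fun j _ => by ring
  rw [hexp]
  set S := ∑ i, ∑ j, RD G i j * (α * v i ^ 2 + (1 - α) * (v i * v j)) with hS
  have hswap : S = ∑ i, ∑ j, RD G i j * (α * v j ^ 2 + (1 - α) * (v i * v j)) := by
    rw [hS, Finset.sum_comm]
    refine Finset.sum_congr rfl fun i _ => Finset.sum_congr rfl fun j _ => ?_
    rw [RD_symm G j i]
    ring
  have h2 : 2 * S = ∑ i, ∑ j, RD G i j *
      (α * (v i ^ 2 + v j ^ 2) + 2 * (1 - α) * (v i * v j)) := by
    rw [two_mul]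
    nth_rewrite 2 [hswap]
    rw [hS, ← Finset.sum_add_distrib]
    refine Finset.sum_congr rfl fun i _ => ?_
    rw [← Finset.sum_add_distrib]
    exact Finset.sum_congr rfl fun j _ => by ring
  have h3 : 0 ≤ 2 * S := by
    rw [h2]
    refine Finset.sum_nonneg fun i _ => Finset.sum_nonneg fun j _ => mul_nonneg (RD_nonneg G i j) ?_
    nlinarith [sq_nonneg (v i + v j), sq_nonneg (v i - v j)]
  linarith


lemma dot_self_eq_sum_sq (v : V → ℝ) : v ⬝ᵥ v = ∑ i, v i ^ 2 := by
  simp [dotProduct, sq]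

lemma one_dot_one : ((fun _ => (1:ℝ)) : V → ℝ) ⬝ᵥ (fun _ => (1:ℝ)) = (Fintype.card V : ℝ) := by
  simp [dotProduct]

lemma exists_unit_vec {M : Matrix V V ℝ} (hM : M.IsHermitian) (k : V) :
    ∃ v : V → ℝ, v ⬝ᵥ v = 1 ∧ v ⬝ᵥ (M *ᵥ v) = hM.eigenvalues k := by
  obtain ⟨h1, h2, _⟩ := core hM (Pi.single k (1:ℝ))
  have hsq : ∀ i : V, (((Pi.single k (1:ℝ)) : V → ℝ) i) ^ 2 = if i = k then 1 else 0 := by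
    intro i
    by_cases h : i = k <;> simp [Pi.single_apply, h]
  refine ⟨(hM.eigenvectorUnitary : Matrix V V ℝ) *ᵥ Pi.single k (1:ℝ), ?_, ?_⟩
  · rw [h1, Finset.sum_congr rfl fun i _ => hsq i]
    simp
  · rw [h2, Finset.sum_congr rfl fun i _ => by rw [hsq i]]
    simp

lemma entry_const {M : Matrix V V ℝ} (hM : M.IsHermitian) {i₁ : V} {m : ℝ}
    (hμ : ∀ k, k ≠ i₁ → hM.eigenvalues k = m) (i j : V) :
    M i j = m * (if i = j then 1 else 0)
      + (hM.eigenvalues i₁ - m) * ((hM.eigenvectorUnitary : Matrix V V ℝ) i i₁ *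
          (hM.eigenvectorUnitary : Matrix V V ℝ) j i₁) := by
  rw [entry_formula hM i j]
  have h : ∀ k : V, hM.eigenvalues k * ((hM.eigenvectorUnitary : Matrix V V ℝ) i k *
        (hM.eigenvectorUnitary : Matrix V V ℝ) j k)
      = m * ((hM.eigenvectorUnitary : Matrix V V ℝ) i k *
          (hM.eigenvectorUnitary : Matrix V V ℝ) j k)
        + (if k = i₁ then (hM.eigenvalues i₁ - m) * ((hM.eigenvectorUnitary : Matrix V V ℝ) i i₁ *
            (hM.eigenvectorUnitary : Matrix V V ℝ) j i₁) else 0) := by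
    intro k
    by_cases hk : k = i₁
    · subst hk; rw [if_pos rfl]; ring
    · rw [hμ k hk]; rw [if_neg hk]; ring
  rw [Finset.sum_congr rfl fun k _ => h k, Finset.sum_add_distrib, ← Finset.mul_sum,
    row_orthonormal hM, Finset.sum_ite_eq' Finset.univ i₁, if_pos (Finset.mem_univ _)]

lemma eq_top_of_offdiag_const {n : ℕ} (hn : 2 ≤ n) {G : SimpleGraph (Fin n)} (hG : G.Connected)
    {α : ℝ} (hα1 : α < 1)
    (hc : ∀ i j k l : Fin n, i ≠ j → k ≠ l → RDa α G i j = RDa α G k l) :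
    G = ⊤ := by
  have h01 : (⟨0, by omega⟩ : Fin n) ≠ ⟨1, by omega⟩ := by simp [Fin.ext_iff]
  obtain ⟨p⟩ := hG.preconnected ⟨0, by omega⟩ ⟨1, by omega⟩
  have hnil : ¬ p.Nil := SimpleGraph.Walk.not_nil_of_ne h01
  have hadj : G.Adj ⟨0, by omega⟩ (p.getVert 1) := p.adj_snd hnil
  have hne : (⟨0, by omega⟩ : Fin n) ≠ p.getVert 1 := hadj.ne
  have hd1 : G.dist ⟨0, by omega⟩ (p.getVert 1) = 1 := SimpleGraph.dist_eq_one_iff_adj.mpr hadj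
  ext i j
  simp only [SimpleGraph.top_adj]
  constructor
  · exact fun h => h.ne
  · intro hij
    have h := hc i j _ _ hij hne
    rw [RDa_apply_ne α G hij, RDa_apply_ne α G hne, RD_apply_ne G hij, RD_apply_ne G hne, hd1] at h
    have hα' : (1:ℝ) - α ≠ 0 := by linarith
    have hdpos : 0 < G.dist i j := hG.pos_dist_of_ne hij
    have hdR : (0:ℝ) < (G.dist i j : ℝ) := by exact_mod_cast hdpos
    have h2 : 1 / (G.dist i j : ℝ) = 1 / ((1 : ℕ) : ℝ) := mul_left_cancel₀ hα' h
    have hdist : (G.dist i j : ℝ) = 1 := by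
      rw [Nat.cast_one] at h2
      field_simp at h2
      linarith
    have hd : G.dist i j = 1 := by exact_mod_cast hdist
    exact SimpleGraph.dist_eq_one_iff_adj.mp hd

lemma sum_ite_const [Nonempty V] (i : V) (a b : ℝ) :
    ∑ j, (if i = j then a else b) = a + ((Fintype.card V : ℝ) - 1) * b := by
  rw [← Finset.add_sum_erase Finset.univ _ (Finset.mem_univ i), if_pos rfl]
  congr 1
  rw [Finset.sum_congr rfl (fun j hj => if_neg (Ne.symm (Finset.ne_of_mem_erase hj))),
    Finset.sum_const, Finset.card_erase_of_mem (Finset.mem_univ i), Finset.card_univ,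
    nsmul_eq_mul]
  have h1 : 1 ≤ Fintype.card V := Fintype.card_pos
  rw [Nat.cast_sub h1, Nat.cast_one]

lemma RD_top (i j : V) : RD (⊤ : SimpleGraph V) i j = if i = j then 0 else 1 := by
  by_cases h : i = j
  · simp [RD, h]
  · rw [RD_apply_ne _ h, if_neg h]
    have hd : (⊤ : SimpleGraph V).dist i j = 1 :=
      SimpleGraph.dist_eq_one_iff_adj.mpr ((SimpleGraph.top_adj i j).mpr h)
    rw [hd]
    norm_num

lemma RTr_top [Nonempty V] (i : V) : RTr (⊤ : SimpleGraph V) i = (Fintype.card V : ℝ) - 1 := by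
  unfold RTr
  rw [Finset.sum_congr rfl fun j _ => RD_top i j, sum_ite_const i 0 1]
  ring

lemma RDa_top_apply [Nonempty V] (α : ℝ) (i j : V) :
    RDa α (⊤ : SimpleGraph V) i j
      = if i = j then α * ((Fintype.card V : ℝ) - 1) else (1 - α) := by
  by_cases h : i = j
  · subst h
    rw [if_pos rfl, RDa_apply_self, RTr_top]
  · rw [if_neg h, RDa_apply_ne α _ h, RD_top, if_neg h, mul_one]

lemma quad_top [Nonempty V] (α : ℝ) (v : V → ℝ) :
    v ⬝ᵥ (RDa α (⊤ : SimpleGraph V) *ᵥ v)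
      = (α * (Fintype.card V : ℝ) - 1) * ∑ i, v i ^ 2 + (1 - α) * (∑ i, v i) ^ 2 := by
  have hentry : ∀ i j : V, RDa α (⊤ : SimpleGraph V) i j
      = (1 - α) + (if i = j then α * ((Fintype.card V : ℝ) - 1) - (1 - α) else 0) := by
    intro i j
    rw [RDa_top_apply]
    by_cases h : i = j <;> simp [h]
  have hexp : v ⬝ᵥ (RDa α (⊤ : SimpleGraph V) *ᵥ v)
      = ∑ i, ∑ j, v i * (RDa α (⊤ : SimpleGraph V) i j * v j) := by
    simp only [dotProduct, Matrix.mulVec, Finset.mul_sum]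
  rw [hexp]
  have hsplit : ∀ i : V, ∑ j, v i * (RDa α (⊤ : SimpleGraph V) i j * v j)
      = (1 - α) * (v i * ∑ j, v j) + (α * (Fintype.card V : ℝ) - 1) * v i ^ 2 := by
    intro i
    rw [Finset.sum_congr rfl fun j _ => by rw [hentry i j]]
    have : ∀ j : V, v i * (((1 - α) + (if i = j then α * ((Fintype.card V : ℝ) - 1) - (1 - α) else 0)) * v j)
        = (1 - α) * (v i * v j) + (if i = j then (α * ((Fintype.card V : ℝ) - 1) - (1 - α)) * (v i * v j) else 0) := by
      intro j
      by_cases h : i = j <;> simp [h] <;> ring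
    rw [Finset.sum_congr rfl fun j _ => this j, Finset.sum_add_distrib,
      Finset.sum_ite_eq Finset.univ i, if_pos (Finset.mem_univ _)]
    simp only [← Finset.mul_sum]
    ring
  have h1 : ∑ i, ((1 - α) * (v i * ∑ j, v j)) = (1 - α) * (∑ i, v i) ^ 2 := by
    rw [← Finset.mul_sum, ← Finset.sum_mul]
    ring
  have h2 : ∑ i, ((α * (Fintype.card V : ℝ) - 1) * v i ^ 2)
      = (α * (Fintype.card V : ℝ) - 1) * ∑ i, v i ^ 2 := by
    rw [Finset.mul_sum]
  rw [Finset.sum_congr rfl fun i _ => hsplit i, Finset.sum_add_distrib, h1, h2]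
  ring

end SpreadAux

/-- Lower bound for the `RD_α`-spread in terms of the Frobenius norm, for `α ∈ [1/2, 1)`,
where `x` is either `√(∑ RTr(v_i)²/n)` or `2H(G)/n`; equality iff `G ≅ K_n`
(Theorem 2.6 (ii)). -/
theorem RDa_spread_lower_frobenius {n : ℕ} (hn : 2 ≤ n) (G : SimpleGraph (Fin n))
    (hG : G.Connected) (α : ℝ) (hα : α ∈ Set.Ico (1 / 2 : ℝ) 1)
    (hH : (RDa α G).IsHermitian) (x : ℝ)
    (hx : x = Real.sqrt ((∑ i, (RTr G i) ^ 2) / n) ∨ x = 2 * harary G / n) :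
    x - Real.sqrt (((∑ i, ∑ j, (RDa α G i j) ^ 2) - x ^ 2) / (n - 1)) ≤ spread hH ∧
    (spread hH = x - Real.sqrt (((∑ i, ∑ j, (RDa α G i j) ^ 2) - x ^ 2) / (n - 1)) ↔
      G = (⊤ : SimpleGraph (Fin n))) := by
  obtain ⟨hα2, hα1⟩ := hα
  haveI : Nonempty (Fin n) := ⟨⟨0, by omega⟩⟩
  have hn2R : (2:ℝ) ≤ (n:ℝ) := by exact_mod_cast hn
  have hnR : (0:ℝ) < (n:ℝ) := by linarith
  have hn1R : (0:ℝ) < (n:ℝ) - 1 := by linarith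
  have heig0 : ∀ k, 0 ≤ hH.eigenvalues k := by
    intro k
    obtain ⟨v, hv1, hv2⟩ := SpreadAux.exists_unit_vec hH k
    rw [← hv2]
    exact SpreadAux.quad_nonneg hα2 G v
  have hbddA : BddAbove (Set.range hH.eigenvalues) := Set.Finite.bddAbove (Set.finite_range _)
  have hbddB : BddBelow (Set.range hH.eigenvalues) := Set.Finite.bddBelow (Set.finite_range _)
  have hle_max : ∀ k, hH.eigenvalues k ≤ maxEig hH := fun k => le_ciSup hbddA k
  have hmin_le : ∀ k, minEig hH ≤ hH.eigenvalues k := fun k => ciInf_le hbddB k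
  obtain ⟨i₁, hi₁⟩ := Finite.exists_max hH.eigenvalues
  have hmax : maxEig hH = hH.eigenvalues i₁ := le_antisymm (ciSup_le hi₁) (hle_max i₁)
  obtain ⟨i₀, hi₀⟩ := Finite.exists_min hH.eigenvalues
  have hminE : minEig hH = hH.eigenvalues i₀ := le_antisymm (ciInf_le hbddB i₀) (le_ciInf hi₀)
  have hm0 : 0 ≤ minEig hH := hminE ▸ heig0 i₀
  -- Rayleigh data at the all-ones vector
  obtain ⟨w1, hw1⟩ := SpreadAux.exists_w hH ((fun _ => 1) : Fin n → ℝ)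
  obtain ⟨e1, e2, e3⟩ := SpreadAux.core hH w1
  rw [← hw1, SpreadAux.one_dot_one, Fintype.card_fin] at e1
  rw [← hw1, SpreadAux.one_dot_mulVec_one] at e2
  rw [← hw1, SpreadAux.mulVec_one_dot] at e3
  have hxle : x ≤ hH.eigenvalues i₁ := by
    rcases hx with hx' | hx'
    · have h3 : ∑ i, RTr G i ^ 2 ≤ hH.eigenvalues i₁ ^ 2 * (n:ℝ) := by
        rw [e3]
        calc ∑ k, hH.eigenvalues k ^ 2 * w1 k ^ 2
            ≤ ∑ k, hH.eigenvalues i₁ ^ 2 * w1 k ^ 2 :=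
              Finset.sum_le_sum fun k _ => mul_le_mul_of_nonneg_right
                (by nlinarith [heig0 k, hi₁ k, heig0 i₁]) (sq_nonneg _)
          _ = hH.eigenvalues i₁ ^ 2 * (n:ℝ) := by rw [← Finset.mul_sum, ← e1]
      rw [hx']
      have hdiv : (∑ i, RTr G i ^ 2) / (n:ℝ) ≤ hH.eigenvalues i₁ ^ 2 := by
        rw [div_le_iff₀ hnR]; linarith
      calc Real.sqrt ((∑ i, RTr G i ^ 2) / (n:ℝ))
          ≤ Real.sqrt (hH.eigenvalues i₁ ^ 2) := Real.sqrt_le_sqrt hdiv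
        _ = hH.eigenvalues i₁ := Real.sqrt_sq (heig0 i₁)
    · have h2 : ∑ i, RTr G i ≤ hH.eigenvalues i₁ * (n:ℝ) := by
        rw [e2]
        calc ∑ k, hH.eigenvalues k * w1 k ^ 2
            ≤ ∑ k, hH.eigenvalues i₁ * w1 k ^ 2 :=
              Finset.sum_le_sum fun k _ => mul_le_mul_of_nonneg_right (hi₁ k) (sq_nonneg _)
          _ = hH.eigenvalues i₁ * (n:ℝ) := by rw [← Finset.mul_sum, ← e1]
      rw [hx', harary, div_le_iff₀ hnR]
      linarith
  have hx0 : 0 ≤ x := by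
    rcases hx with hx' | hx'
    · rw [hx']; positivity
    · rw [hx']
      have h0 : 0 ≤ ∑ i, RTr G i := Finset.sum_nonneg fun i _ => SpreadAux.RTr_nonneg G i
      rw [harary]
      apply div_nonneg _ (le_of_lt hnR)
      linarith
  have hF : ∑ k, hH.eigenvalues k ^ 2 = ∑ i, ∑ j, (RDa α G i j) ^ 2 := SpreadAux.sum_eigensq hH
  have hFsplit : ∑ k ∈ Finset.univ.erase i₁, hH.eigenvalues k ^ 2
      = (∑ i, ∑ j, (RDa α G i j) ^ 2) - hH.eigenvalues i₁ ^ 2 := by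
    rw [← hF, ← Finset.add_sum_erase Finset.univ _ (Finset.mem_univ i₁)]; ring
  have hxsq : x ^ 2 ≤ hH.eigenvalues i₁ ^ 2 := by nlinarith
  have hFx : ∑ k ∈ Finset.univ.erase i₁, hH.eigenvalues k ^ 2
      ≤ (∑ i, ∑ j, (RDa α G i j) ^ 2) - x ^ 2 := by
    rw [hFsplit]; linarith
  have hFx0 : 0 ≤ (∑ i, ∑ j, (RDa α G i j) ^ 2) - x ^ 2 :=
    le_trans (Finset.sum_nonneg fun k _ => sq_nonneg _) hFx
  have hcard : (((Finset.univ : Finset (Fin n)).erase i₁).card : ℝ) = (n:ℝ) - 1 := by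
    rw [Finset.card_erase_of_mem (Finset.mem_univ _), Finset.card_univ, Fintype.card_fin,
      Nat.cast_sub (by omega), Nat.cast_one]
  have hsum_ge : ((n:ℝ) - 1) * minEig hH ≤ ∑ k ∈ Finset.univ.erase i₁, hH.eigenvalues k := by
    calc ((n:ℝ) - 1) * minEig hH = ∑ _k ∈ Finset.univ.erase i₁, minEig hH := by
          rw [Finset.sum_const, nsmul_eq_mul, hcard]
      _ ≤ _ := Finset.sum_le_sum fun k _ => hmin_le k
  have hs0 : 0 ≤ Real.sqrt (((∑ i, ∑ j, (RDa α G i j) ^ 2) - x ^ 2) / ((n:ℝ) - 1)) :=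
    Real.sqrt_nonneg _
  have hs2 : Real.sqrt (((∑ i, ∑ j, (RDa α G i j) ^ 2) - x ^ 2) / ((n:ℝ) - 1)) ^ 2
      = ((∑ i, ∑ j, (RDa α G i j) ^ 2) - x ^ 2) / ((n:ℝ) - 1) :=
    Real.sq_sqrt (div_nonneg hFx0 (le_of_lt hn1R))
  have hmins : minEig hH ≤ Real.sqrt (((∑ i, ∑ j, (RDa α G i j) ^ 2) - x ^ 2) / ((n:ℝ) - 1)) := by
    rcases le_or_gt (minEig hH) 0 with h | h
    · linarith
    · have hcheb := sq_sum_le_card_mul_sum_sq (s := Finset.univ.erase i₁) (f := hH.eigenvalues)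
      have hq : (((n:ℝ) - 1) * minEig hH) ^ 2
          ≤ ((n:ℝ) - 1) * ((∑ i, ∑ j, (RDa α G i j) ^ 2) - x ^ 2) := by
        calc (((n:ℝ) - 1) * minEig hH) ^ 2
            ≤ (∑ k ∈ Finset.univ.erase i₁, hH.eigenvalues k) ^ 2 := by
              apply pow_le_pow_left₀ (by positivity) hsum_ge
          _ ≤ (((Finset.univ : Finset (Fin n)).erase i₁).card : ℝ)
                * ∑ k ∈ Finset.univ.erase i₁, hH.eigenvalues k ^ 2 := by exact_mod_cast hcheb
          _ ≤ ((n:ℝ) - 1) * ((∑ i, ∑ j, (RDa α G i j) ^ 2) - x ^ 2) := by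
              rw [hcard]
              exact mul_le_mul_of_nonneg_left hFx (le_of_lt hn1R)
      have hq2 : minEig hH ^ 2 ≤ ((∑ i, ∑ j, (RDa α G i j) ^ 2) - x ^ 2) / ((n:ℝ) - 1) := by
        rw [le_div_iff₀ hn1R]
        nlinarith
      calc minEig hH = Real.sqrt (minEig hH ^ 2) := (Real.sqrt_sq h.le).symm
        _ ≤ _ := Real.sqrt_le_sqrt hq2
  have hspread : spread hH = hH.eigenvalues i₁ - minEig hH := by rw [spread, hmax]
  have hineq : x - Real.sqrt (((∑ i, ∑ j, (RDa α G i j) ^ 2) - x ^ 2) / ((n:ℝ) - 1))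
      ≤ spread hH := by rw [hspread]; linarith
  refine ⟨hineq, ?_, ?_⟩
  · -- equality implies complete
    intro heq
    rw [hspread] at heq
    have hlamx : hH.eigenvalues i₁ = x := by linarith
    have hmeq : minEig hH
        = Real.sqrt (((∑ i, ∑ j, (RDa α G i j) ^ 2) - x ^ 2) / ((n:ℝ) - 1)) := by linarith
    have hm2 : ((n:ℝ) - 1) * minEig hH ^ 2 = (∑ i, ∑ j, (RDa α G i j) ^ 2) - x ^ 2 := by
      rw [hmeq, hs2]
      field_simp
    -- all other eigenvalues equal the minimum
    have hall : ∀ k, k ≠ i₁ → hH.eigenvalues k = minEig hH := by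
      have hzero : ∑ k ∈ Finset.univ.erase i₁, (hH.eigenvalues k - minEig hH) ^ 2 ≤ 0 := by
        have hexpand : ∑ k ∈ Finset.univ.erase i₁, (hH.eigenvalues k - minEig hH) ^ 2
            = (∑ k ∈ Finset.univ.erase i₁, hH.eigenvalues k ^ 2)
              - 2 * minEig hH * (∑ k ∈ Finset.univ.erase i₁, hH.eigenvalues k)
              + ((n:ℝ) - 1) * minEig hH ^ 2 := by
          rw [Finset.sum_congr rfl fun k _ => sub_sq (hH.eigenvalues k) (minEig hH)]
          rw [Finset.sum_add_distrib, Finset.sum_sub_distrib, Finset.sum_const, nsmul_eq_mul,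
            hcard]
          rw [show ∑ k ∈ Finset.univ.erase i₁, 2 * hH.eigenvalues k * minEig hH
              = 2 * minEig hH * ∑ k ∈ Finset.univ.erase i₁, hH.eigenvalues k by
            rw [Finset.mul_sum]; exact Finset.sum_congr rfl fun k _ => by ring]
        rw [hexpand, hFsplit, hlamx]
        nlinarith [hsum_ge, hm0]
      intro k hk
      have hz := Finset.sum_eq_zero_iff_of_nonneg
        (fun k (_ : k ∈ Finset.univ.erase i₁) => sq_nonneg (hH.eigenvalues k - minEig hH))
      have : (hH.eigenvalues k - minEig hH) ^ 2 = 0 := by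
        have hsz : ∑ k ∈ Finset.univ.erase i₁, (hH.eigenvalues k - minEig hH) ^ 2 = 0 :=
          le_antisymm hzero (Finset.sum_nonneg fun k _ => sq_nonneg _)
        exact (hz.mp hsz) k (Finset.mem_erase.mpr ⟨hk, Finset.mem_univ k⟩)
      have := sq_eq_zero_iff.mp this
      linarith
    -- the top eigenvalue vs the others
    by_cases hlm : hH.eigenvalues i₁ = minEig hH
    · exfalso
      have ha : (⟨0, by omega⟩ : Fin n) ≠ ⟨1, by omega⟩ := by simp [Fin.ext_iff]
      have hMab := SpreadAux.entry_const hH (i₁ := i₁) (m := minEig hH)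
        hall ⟨0, by omega⟩ ⟨1, by omega⟩
      rw [if_neg ha, hlm, sub_self, zero_mul, mul_zero, zero_add] at hMab
      have := SpreadAux.RDa_pos hG hα1 ha
      rw [hMab] at this
      exact lt_irrefl 0 this
    · have hlm' : minEig hH < hH.eigenvalues i₁ :=
        lt_of_le_of_ne (hmin_le i₁) (Ne.symm hlm)
      -- w1 vanishes away from i₁
      have hw0 : ∀ k, k ≠ i₁ → w1 k = 0 := by
        rcases hx with hx' | hx'
        · -- x = sqrt (∑ RTr² / n)
          have hx2 : x ^ 2 = (∑ i, RTr G i ^ 2) / (n:ℝ) := by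
            rw [hx']; exact Real.sq_sqrt (by positivity)
          have hzs : ∑ k, (hH.eigenvalues i₁ ^ 2 - hH.eigenvalues k ^ 2) * w1 k ^ 2 = 0 := by
            have : ∑ k, (hH.eigenvalues i₁ ^ 2 - hH.eigenvalues k ^ 2) * w1 k ^ 2
                = hH.eigenvalues i₁ ^ 2 * (∑ k, w1 k ^ 2) - ∑ k, hH.eigenvalues k ^ 2 * w1 k ^ 2 := by
              rw [Finset.mul_sum, ← Finset.sum_sub_distrib]
              exact Finset.sum_congr rfl fun k _ => by ring
            rw [this, ← e1, ← e3, hlamx, hx2]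
            field_simp
            ring
          have hterm : ∀ k ∈ Finset.univ,
              0 ≤ (hH.eigenvalues i₁ ^ 2 - hH.eigenvalues k ^ 2) * w1 k ^ 2 := by
            intro k _
            have : hH.eigenvalues k ^ 2 ≤ hH.eigenvalues i₁ ^ 2 := by
              nlinarith [heig0 k, hi₁ k]
            nlinarith [sq_nonneg (w1 k)]
          intro k hk
          have hzk := (Finset.sum_eq_zero_iff_of_nonneg hterm).mp hzs k (Finset.mem_univ k)
          have hcoef : 0 < hH.eigenvalues i₁ ^ 2 - hH.eigenvalues k ^ 2 := by
            rw [hall k hk]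
            nlinarith [hm0]
          have := mul_eq_zero.mp hzk
          rcases this with h | h
          · linarith
          · exact pow_eq_zero_iff (by norm_num) |>.mp h
        · -- x = 2H/n
          have hx2 : (n:ℝ) * x = ∑ i, RTr G i := by
            rw [hx', harary]
            field_simp
          have hzs : ∑ k, (hH.eigenvalues i₁ - hH.eigenvalues k) * w1 k ^ 2 = 0 := by
            have : ∑ k, (hH.eigenvalues i₁ - hH.eigenvalues k) * w1 k ^ 2
                = hH.eigenvalues i₁ * (∑ k, w1 k ^ 2) - ∑ k, hH.eigenvalues k * w1 k ^ 2 := by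
              rw [Finset.mul_sum, ← Finset.sum_sub_distrib]
              exact Finset.sum_congr rfl fun k _ => by ring
            rw [this, ← e1, ← e2, hlamx]
            linarith [hx2]
          have hterm : ∀ k ∈ Finset.univ,
              0 ≤ (hH.eigenvalues i₁ - hH.eigenvalues k) * w1 k ^ 2 := by
            intro k _
            have := hi₁ k
            nlinarith [sq_nonneg (w1 k)]
          intro k hk
          have hzk := (Finset.sum_eq_zero_iff_of_nonneg hterm).mp hzs k (Finset.mem_univ k)
          have hcoef : 0 < hH.eigenvalues i₁ - hH.eigenvalues k := by
            rw [hall k hk]; linarith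
          have := mul_eq_zero.mp hzk
          rcases this with h | h
          · linarith
          · exact pow_eq_zero_iff (by norm_num) |>.mp h
      -- the all-ones vector is a top eigenvector
      have hwi : ∀ i : Fin n, (hH.eigenvectorUnitary : Matrix (Fin n) (Fin n) ℝ) i i₁ * w1 i₁ = 1 := by
        intro i
        have h := congrFun hw1 i
        simp only [Matrix.mulVec, dotProduct] at h
        rw [Finset.sum_eq_single i₁] at h
        · exact h.symm
        · intro b _ hb
          rw [hw0 b hb, mul_zero]
        · intro hb
          exact absurd (Finset.mem_univ i₁) hb
      have hw1ne : w1 i₁ ≠ 0 := by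
        intro h0
        have := hwi ⟨0, by omega⟩
        rw [h0, mul_zero] at this
        exact one_ne_zero this.symm
      have hUcol : ∀ i : Fin n, (hH.eigenvectorUnitary : Matrix (Fin n) (Fin n) ℝ) i i₁ = 1 / w1 i₁ := by
        intro i
        field_simp
        have := hwi i
        field_simp at this
        linarith [this]
      have hc : ∀ i j k l : Fin n, i ≠ j → k ≠ l → RDa α G i j = RDa α G k l := by
        intro i j k l hij hkl
        have h1 := SpreadAux.entry_const hH (i₁ := i₁) (m := minEig hH) hall i j
        have h2 := SpreadAux.entry_const hH (i₁ := i₁) (m := minEig hH) hall k l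
        rw [if_neg hij, hUcol i, hUcol j] at h1
        rw [if_neg hkl, hUcol k, hUcol l] at h2
        rw [h1, h2]
      exact SpreadAux.eq_top_of_offdiag_const hn hG hα1 hc
  · -- completeness implies equality
    intro htop
    subst htop
    have hRTrt : ∀ i : Fin n, RTr ⊤ i = (n:ℝ) - 1 := by
      intro i
      rw [SpreadAux.RTr_top, Fintype.card_fin]
    have hn1 : (0:ℝ) ≤ (n:ℝ) - 1 := le_of_lt hn1R
    have hxval : x = (n:ℝ) - 1 := by
      rcases hx with hx' | hx'
      · rw [hx', Finset.sum_congr rfl fun i _ => by rw [hRTrt i], Finset.sum_const,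
          Finset.card_univ, Fintype.card_fin, nsmul_eq_mul]
        rw [mul_comm, mul_div_assoc, div_self (ne_of_gt hnR), mul_one]
        exact Real.sqrt_sq hn1
      · rw [hx', harary, Finset.sum_congr rfl fun i _ => by rw [hRTrt i], Finset.sum_const,
          Finset.card_univ, Fintype.card_fin, nsmul_eq_mul]
        field_simp
    -- top eigenvalue
    have hqt : ∀ v : Fin n → ℝ, v ⬝ᵥ (RDa α (⊤ : SimpleGraph (Fin n)) *ᵥ v)
        = (α * (n:ℝ) - 1) * ∑ i, v i ^ 2 + (1 - α) * (∑ i, v i) ^ 2 := by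
      intro v
      rw [SpreadAux.quad_top, Fintype.card_fin]
    have hub : ∀ k, hH.eigenvalues k ≤ (n:ℝ) - 1 := by
      intro k
      obtain ⟨v, hv1, hv2⟩ := SpreadAux.exists_unit_vec hH k
      rw [SpreadAux.dot_self_eq_sum_sq] at hv1
      rw [hqt v, hv1, mul_one] at hv2
      have hch := sq_sum_le_card_mul_sum_sq (s := (Finset.univ : Finset (Fin n))) (f := v)
      rw [Finset.card_univ, Fintype.card_fin, hv1, mul_one] at hch
      have hch' : (∑ i, v i) ^ 2 ≤ (n:ℝ) := hch
      have h6 : (1 - α) * (∑ i, v i) ^ 2 ≤ (1 - α) * (n:ℝ) :=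
        mul_le_mul_of_nonneg_left hch' (by linarith)
      linarith
    have hlb : ∀ k, α * (n:ℝ) - 1 ≤ hH.eigenvalues k := by
      intro k
      obtain ⟨v, hv1, hv2⟩ := SpreadAux.exists_unit_vec hH k
      rw [SpreadAux.dot_self_eq_sum_sq] at hv1
      rw [hqt v, hv1, mul_one] at hv2
      have h6 : 0 ≤ (1 - α) * (∑ i, v i) ^ 2 := mul_nonneg (by linarith) (sq_nonneg _)
      linarith
    have hmaxval : maxEig hH = (n:ℝ) - 1 := by
      have h1 : maxEig hH ≤ (n:ℝ) - 1 := ciSup_le hub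
      have h2 : (n:ℝ) - 1 ≤ maxEig hH := by
        have hsum : ∑ i, RTr (⊤ : SimpleGraph (Fin n)) i = (n:ℝ) * ((n:ℝ) - 1) := by
          rw [Finset.sum_congr rfl fun i _ => by rw [hRTrt i], Finset.sum_const,
            Finset.card_univ, Fintype.card_fin, nsmul_eq_mul]
        have hle : (n:ℝ) * ((n:ℝ) - 1) ≤ hH.eigenvalues i₁ * (n:ℝ) := by
          rw [← hsum, e2]
          calc ∑ k, hH.eigenvalues k * w1 k ^ 2
              ≤ ∑ k, hH.eigenvalues i₁ * w1 k ^ 2 :=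
                Finset.sum_le_sum fun k _ => mul_le_mul_of_nonneg_right (hi₁ k) (sq_nonneg _)
            _ = hH.eigenvalues i₁ * (n:ℝ) := by rw [← Finset.mul_sum, ← e1]
        rw [hmax]
        nlinarith
      linarith
    have hminval : minEig hH = α * (n:ℝ) - 1 := by
      have h1 : α * (n:ℝ) - 1 ≤ minEig hH := le_ciInf hlb
      have h2 : minEig hH ≤ α * (n:ℝ) - 1 := by
        set a : Fin n := ⟨0, by omega⟩
        set b : Fin n := ⟨1, by omega⟩
        have hab : a ≠ b := by simp [a, b, Fin.ext_iff]
        set v : Fin n → ℝ := fun k => (if k = a then (1:ℝ) else 0) - (if k = b then (1:ℝ) else 0)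
          with hv
        have hvsq : ∀ k, v k ^ 2 = (if k = a then (1:ℝ) else 0) + (if k = b then (1:ℝ) else 0) := by
          intro k
          by_cases h1' : k = a
          · have h2' : ¬ k = b := by rw [h1']; exact hab
            simp [hv, h1', h2', hab, Ne.symm hab]
          · by_cases h2' : k = b
            · simp [hv, h1', h2', hab, Ne.symm hab]
            · simp [hv, h1', h2', hab, Ne.symm hab]
        have hsumsq : ∑ k, v k ^ 2 = 2 := by
          rw [Finset.sum_congr rfl fun k _ => hvsq k, Finset.sum_add_distrib,
            Finset.sum_ite_eq' Finset.univ a, Finset.sum_ite_eq' Finset.univ b]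
          simp
          norm_num
        have hsumv : ∑ k, v k = 0 := by
          rw [hv]
          simp only [Finset.sum_sub_distrib, Finset.sum_ite_eq' Finset.univ a,
            Finset.sum_ite_eq' Finset.univ b]
          simp
        obtain ⟨w2, hw2⟩ := SpreadAux.exists_w hH v
        obtain ⟨f1, f2, _⟩ := SpreadAux.core hH w2
        rw [← hw2] at f1 f2
        rw [SpreadAux.dot_self_eq_sum_sq, hsumsq] at f1
        rw [hqt v, hsumsq, hsumv] at f2
        -- f2 : (α n - 1) * 2 + (1-α) * 0 ^ 2 = ∑ μ w2²
        have hray : minEig hH * 2 ≤ (α * (n:ℝ) - 1) * 2 := by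
          have : minEig hH * 2 = ∑ k, minEig hH * w2 k ^ 2 := by
            rw [← Finset.mul_sum, ← f1]
          rw [this]
          have h5 : ∑ k, minEig hH * w2 k ^ 2 ≤ ∑ k, hH.eigenvalues k * w2 k ^ 2 :=
            Finset.sum_le_sum fun k _ => mul_le_mul_of_nonneg_right (hmin_le k) (sq_nonneg _)
          calc ∑ k, minEig hH * w2 k ^ 2 ≤ ∑ k, hH.eigenvalues k * w2 k ^ 2 := h5
            _ = (α * (n:ℝ) - 1) * 2 := by rw [← f2]; ring
        linarith
      linarith
    -- values of all the quantities
    have hFval : ∑ i, ∑ j, (RDa α (⊤ : SimpleGraph (Fin n)) i j) ^ 2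
        = (n:ℝ) * (α * ((n:ℝ) - 1)) ^ 2 + (n:ℝ) * (((n:ℝ) - 1) * (1 - α) ^ 2) := by
      have hinner : ∀ i : Fin n, ∑ j, (RDa α (⊤ : SimpleGraph (Fin n)) i j) ^ 2
          = (α * ((n:ℝ) - 1)) ^ 2 + ((n:ℝ) - 1) * (1 - α) ^ 2 := by
        intro i
        have : ∀ j : Fin n, (RDa α (⊤ : SimpleGraph (Fin n)) i j) ^ 2
            = if i = j then (α * ((n:ℝ) - 1)) ^ 2 else (1 - α) ^ 2 := by
          intro j
          rw [SpreadAux.RDa_top_apply, Fintype.card_fin]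
          by_cases h : i = j
          · rw [if_pos h, if_pos h]
          · rw [if_neg h, if_neg h]
        rw [Finset.sum_congr rfl fun j _ => this j, SpreadAux.sum_ite_const i, Fintype.card_fin]
      rw [Finset.sum_congr rfl fun i _ => hinner i, Finset.sum_add_distrib, Finset.sum_const,
        Finset.sum_const, Finset.card_univ, Fintype.card_fin, nsmul_eq_mul, nsmul_eq_mul]
    have hargval : ((∑ i, ∑ j, (RDa α (⊤ : SimpleGraph (Fin n)) i j) ^ 2) - x ^ 2) / ((n:ℝ) - 1)
        = (α * (n:ℝ) - 1) ^ 2 := by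
      rw [hFval, hxval, div_eq_iff (ne_of_gt hn1R)]
      ring
    have hsval : Real.sqrt (((∑ i, ∑ j, (RDa α (⊤ : SimpleGraph (Fin n)) i j) ^ 2) - x ^ 2) / ((n:ℝ) - 1))
        = α * (n:ℝ) - 1 := by
      rw [hargval]
      have haux : α * 2 ≤ α * (n:ℝ) := mul_le_mul_of_nonneg_left hn2R (by linarith)
      exact Real.sqrt_sq (by linarith)
    rw [spread, hmaxval, hminval, hsval, hxval]
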